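/- arXiv:2103.04408 — 2 statements merged into one kernel-verified Lean document; each statement's English description precedes it below -/
import Mathlib

section
/- Let (X, 𝓑, ρ) be a finite measure space, t ∈ ℝ, and T : 𝓑 → 𝓑 a map satisfying ρ(T(A)) ≤ C̃ · ρ(A)^{1-δ} for all A ∈ 𝓑, where δ ∈ (0,1) and C̃ > 0. Suppose ν is a measure on 𝓑 with ν(A) = ρ(T(A)) for all A, and ν is absolutely continuous with respect to ρ with density f. Then for every λ > 0, ρ({f > λ}) ≤ (C̃/λ)^{1/δ}, and consequently f ∈ L^p(ρ) for every p with p < 1/δ. -/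
open MeasureTheory

/-- Abstract upgrade of quasi-invariance to `L^p` densities: if `ρ` is a finite measure,
`T` a set map with `ρ(T(A)) ≤ C̃ ρ(A)^{1-δ}` for measurable `A` (`δ ∈ (0,1)`, `C̃ > 0`),
and `ν` is a measure with `ν(A) = ρ(T(A))` which is absolutely continuous w.r.t. `ρ`
with density `f`, then `ρ({f > λ}) ≤ (C̃/λ)^{1/δ}` for every `λ > 0`, and consequently
`∫ f^p dρ < ⊤` for every `p < 1/δ`. -/
theorem stmt11 {X : Type*} [MeasurableSpace X] (ρ : Measure X) [IsFiniteMeasure ρ]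
    (T : Set X → Set X) (δ : ℝ) (hδ0 : 0 < δ) (hδ1 : δ < 1)
    (Ctil : ℝ) (hC : 0 < Ctil)
    (hT : ∀ A : Set X, MeasurableSet A →
      ρ (T A) ≤ ENNReal.ofReal Ctil * ρ A ^ (1 - δ))
    (ν : Measure X) (f : X → ENNReal) (hf : Measurable f)
    (hν : ∀ A : Set X, MeasurableSet A → ν A = ρ (T A))
    (hdens : ∀ A : Set X, MeasurableSet A → ν A = ∫⁻ x in A, f x ∂ρ) :
    (∀ lam : ENNReal, 0 < lam →
        ρ {x | lam < f x} ≤ (ENNReal.ofReal Ctil / lam) ^ (1 / δ)) ∧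
      ∀ p : ℝ, 0 < p → p < 1 / δ → ∫⁻ x, f x ^ p ∂ρ < ⊤ := by
  set C := ENNReal.ofReal Ctil with hCdef
  have hCtop : C ≠ ⊤ := ENNReal.ofReal_ne_top
  have h2 : (2 : ENNReal) ≠ 0 := two_ne_zero
  have h2t : (2 : ENNReal) ≠ ⊤ := ENNReal.ofNat_ne_top
  -- Tail bound
  have tail : ∀ lam : ENNReal, 0 < lam →
      ρ {x | lam < f x} ≤ (C / lam) ^ (1 / δ) := by
    intro lam hlam
    rcases eq_or_ne lam ⊤ with rfl | hlamtop
    · have : {x | (⊤ : ENNReal) < f x} = ∅ := by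
        ext x; simp [not_top_lt]
      rw [this]
      simp
    set A := {x | lam < f x} with hAdef
    have hA : MeasurableSet A := hf measurableSet_Ioi
    have key : lam * ρ A ≤ C * ρ A ^ (1 - δ) := by
      calc lam * ρ A = ∫⁻ _ in A, lam ∂ρ := (setLIntegral_const A lam).symm
        _ ≤ ∫⁻ x in A, f x ∂ρ := setLIntegral_mono hf (fun x hx => le_of_lt hx)
        _ = ν A := (hdens A hA).symm
        _ = ρ (T A) := hν A hA
        _ ≤ C * ρ A ^ (1 - δ) := hT A hA
    rcases eq_or_ne (ρ A) 0 with h0 | h0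
    · rw [h0]; exact zero_le
    have hfin : ρ A ≠ ⊤ := measure_ne_top ρ A
    have h1δ : ρ A ^ (1 - δ) ≠ 0 := by
      simp only [ne_eq, ENNReal.rpow_eq_zero_iff, not_or, not_and_or]
      exact ⟨Or.inl h0, Or.inl hfin⟩
    have h1δt : ρ A ^ (1 - δ) ≠ ⊤ := ENNReal.rpow_ne_top_of_nonneg (by linarith) hfin
    have hsplit : ρ A * (ρ A ^ (1 - δ))⁻¹ = ρ A ^ δ := by
      rw [← ENNReal.rpow_neg]
      nth_rewrite 1 [← ENNReal.rpow_one (ρ A)]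
      rw [← ENNReal.rpow_add _ _ h0 hfin, show (1 : ℝ) + -(1 - δ) = δ by ring]
    have hmul := mul_le_mul_left key (ρ A ^ (1 - δ))⁻¹
    rw [mul_assoc lam, hsplit, mul_assoc, ENNReal.mul_inv_cancel h1δ h1δt, mul_one] at hmul
    -- hmul : lam * ρ A ^ δ ≤ C
    have hδle : ρ A ^ δ ≤ C / lam := by
      rw [ENNReal.le_div_iff_mul_le (Or.inl hlam.ne') (Or.inl hlamtop)]
      rw [mul_comm]; exact hmul
    calc ρ A = (ρ A ^ δ) ^ (1 / δ) := by
          rw [← ENNReal.rpow_mul, mul_one_div, div_self hδ0.ne', ENNReal.rpow_one]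
      _ ≤ (C / lam) ^ (1 / δ) := ENNReal.rpow_le_rpow hδle (one_div_pos.mpr hδ0).le
  refine ⟨tail, ?_⟩
  intro p hp hpδ
  set K := C ^ (1 / δ) with hKdef
  have hKtop : K ≠ ⊤ := ENNReal.rpow_ne_top_of_nonneg (one_div_pos.mpr hδ0).le hCtop
  -- dyadic tail bound
  have Sbound : ∀ n : ℕ, ρ {x | (2 : ENNReal) ^ ((n : ℝ)) < f x}
      ≤ K * (2 : ENNReal) ^ (-((n : ℝ) / δ)) := by
    intro n
    have h1 := tail ((2 : ENNReal) ^ ((n : ℝ))) (ENNReal.rpow_pos (by norm_num) h2t)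
    refine h1.trans_eq ?_
    rw [ENNReal.div_rpow_of_nonneg _ _ (one_div_pos.mpr hδ0).le, ← ENNReal.rpow_mul,
      div_eq_mul_inv, ← ENNReal.rpow_neg]
    congr 1
    ring
  -- f is a.e. finite
  have hr0 : (2 : ENNReal) ^ (-(1 / δ)) < 1 :=
    ENNReal.rpow_lt_one_of_one_lt_of_neg (by norm_num) (neg_lt_zero.mpr (one_div_pos.mpr hδ0))
  have hinfty : ρ {x | f x = ⊤} = 0 := by
    have hsub : ∀ n : ℕ, ρ {x | f x = ⊤} ≤ K * (2 : ENNReal) ^ (-((n : ℝ) / δ)) := by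
      intro n
      refine (measure_mono ?_).trans (Sbound n)
      intro x hx
      simp only [Set.mem_setOf_eq] at hx ⊢
      rw [hx]
      exact ENNReal.rpow_lt_top_of_nonneg (by positivity) h2t
    have heq : ∀ n : ℕ, K * (2 : ENNReal) ^ (-((n : ℝ) / δ))
        = K * ((2 : ENNReal) ^ (-(1 / δ))) ^ n := by
      intro n
      rw [← ENNReal.rpow_natCast ((2 : ENNReal) ^ (-(1 / δ))) n, ← ENNReal.rpow_mul]
      congr 2
      ring
    have hlim : Filter.Tendsto (fun n : ℕ => K * ((2 : ENNReal) ^ (-(1 / δ))) ^ n)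
        Filter.atTop (nhds 0) := by
      simpa using ENNReal.Tendsto.const_mul
        (ENNReal.tendsto_pow_atTop_nhds_zero_of_lt_one hr0) (Or.inr hKtop)
    have : ρ {x | f x = ⊤} ≤ 0 := by
      refine ge_of_tendsto hlim ?_
      filter_upwards with n
      rw [← heq n]
      exact hsub n
    exact le_antisymm this zero_le
  -- replace f by a finite version g
  set g : X → ENNReal := fun x => if f x = ⊤ then 0 else f x with hgdef
  have hg : Measurable g :=
    Measurable.ite (hf (measurableSet_singleton ⊤)) measurable_const hf
  have hgf : ∀ x, g x ≤ f x := by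
    intro x
    by_cases h : f x = ⊤ <;> simp [hgdef, h]
  have hgtop : ∀ x, g x ≠ ⊤ := by
    intro x
    by_cases h : f x = ⊤ <;> simp [hgdef, h]
  have hae : (fun x => f x ^ p) =ᵐ[ρ] (fun x => g x ^ p) := by
    have hne : ρ {x | ¬ f x = g x} = 0 := by
      refine measure_mono_null ?_ hinfty
      intro x hx
      simp only [Set.mem_setOf_eq] at hx ⊢
      by_contra h
      exact hx (by simp [hgdef, h])
    have : f =ᵐ[ρ] g := ae_iff.mpr hne
    exact this.fun_comp (fun y => y ^ p)
  rw [lintegral_congr_ae hae]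
  -- the dominating function
  set F : ℕ → X → ENNReal := fun n =>
    Set.indicator {y | (2 : ENNReal) ^ ((n : ℝ)) < g y}
      (fun _ => (2 : ENNReal) ^ (((n : ℝ) + 1) * p)) with hFdef
  have hFmeas : ∀ n, MeasurableSet {y | (2 : ENNReal) ^ ((n : ℝ)) < g y} :=
    fun n => hg measurableSet_Ioi
  have hpt : ∀ x, g x ^ p ≤ 1 + ∑' n : ℕ, F n x := by
    intro x
    by_cases hx1 : g x ≤ 1
    · exact le_trans (ENNReal.rpow_le_one hx1 hp.le) le_self_add
    push_neg at hx1
    have hex : ∃ n : ℕ, g x ≤ (2 : ENNReal) ^ ((n : ℝ) + 1) := by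
      obtain ⟨m, hm⟩ := ENNReal.exists_nat_gt (hgtop x)
      refine ⟨m, hm.le.trans ?_⟩
      calc (m : ENNReal) ≤ ((2 ^ m : ℕ) : ENNReal) := by
            exact_mod_cast (Nat.lt_two_pow_self (n := m)).le
        _ = (2 : ENNReal) ^ ((m : ℝ)) := by
            rw [ENNReal.rpow_natCast]; push_cast; ring
        _ ≤ (2 : ENNReal) ^ ((m : ℝ) + 1) :=
            ENNReal.rpow_le_rpow_of_exponent_le (by norm_num) (by linarith)
    obtain ⟨n, hspec, hmem⟩ : ∃ n : ℕ, g x ≤ (2 : ENNReal) ^ ((n : ℝ) + 1) ∧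
        (2 : ENNReal) ^ ((n : ℝ)) < g x := by
      refine ⟨Nat.find hex, Nat.find_spec hex, ?_⟩
      cases hn : Nat.find hex with
      | zero => simpa using hx1
      | succ m =>
        have hmin := Nat.find_min hex (show m < Nat.find hex by rw [hn]; exact m.lt_succ_self)
        push_neg at hmin
        have hc : ((m + 1 : ℕ) : ℝ) = (m : ℝ) + 1 := by push_cast; ring
        rw [hc]
        exact hmin
    have hFn : F n x = (2 : ENNReal) ^ (((n : ℝ) + 1) * p) := by
      rw [hFdef]
      exact Set.indicator_of_mem (s := {y | (2 : ENNReal) ^ ((n : ℝ)) < g y}) hmem _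
    calc g x ^ p ≤ ((2 : ENNReal) ^ ((n : ℝ) + 1)) ^ p :=
          ENNReal.rpow_le_rpow hspec hp.le
      _ = (2 : ENNReal) ^ (((n : ℝ) + 1) * p) := (ENNReal.rpow_mul _ _ _).symm
      _ = F n x := hFn.symm
      _ ≤ ∑' n : ℕ, F n x := ENNReal.le_tsum n
      _ ≤ 1 + ∑' n : ℕ, F n x := le_add_self
  have hFsum : ∫⁻ x, g x ^ p ∂ρ
      ≤ ρ Set.univ + ∑' n : ℕ, (2 : ENNReal) ^ (((n : ℝ) + 1) * p)
        * ρ {y | (2 : ENNReal) ^ ((n : ℝ)) < g y} := by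
    calc ∫⁻ x, g x ^ p ∂ρ ≤ ∫⁻ x, (1 + ∑' n : ℕ, F n x) ∂ρ := lintegral_mono hpt
      _ = ∫⁻ _, (1 : ENNReal) ∂ρ + ∫⁻ x, ∑' n : ℕ, F n x ∂ρ :=
          lintegral_add_left measurable_const _
      _ = ρ Set.univ + ∑' n : ℕ, ∫⁻ x, F n x ∂ρ := by
          rw [lintegral_one, lintegral_tsum (f := F)
            (fun n => ((measurable_const.indicator (hFmeas n)).aemeasurable))]
      _ = ρ Set.univ + ∑' n : ℕ, (2 : ENNReal) ^ (((n : ℝ) + 1) * p)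
            * ρ {y | (2 : ENNReal) ^ ((n : ℝ)) < g y} := by
          congr 1
          refine tsum_congr (fun n => ?_)
          rw [hFdef]
          exact lintegral_indicator_const (hFmeas n) _
  -- bound the series
  have hterm : ∀ n : ℕ, (2 : ENNReal) ^ (((n : ℝ) + 1) * p)
      * (K * (2 : ENNReal) ^ (-((n : ℝ) / δ)))
      = (K * (2 : ENNReal) ^ p) * ((2 : ENNReal) ^ (p - 1 / δ)) ^ n := by
    intro n
    rw [← ENNReal.rpow_natCast ((2 : ENNReal) ^ (p - 1 / δ)) n, ← ENNReal.rpow_mul,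
      mul_left_comm, ← ENNReal.rpow_add _ _ h2 h2t,
      mul_assoc, ← ENNReal.rpow_add _ _ h2 h2t]
    congr 2
    ring
  have hsum_le : ∑' n : ℕ, (2 : ENNReal) ^ (((n : ℝ) + 1) * p)
      * ρ {y | (2 : ENNReal) ^ ((n : ℝ)) < g y}
      < ⊤ := by
    have hr1 : (2 : ENNReal) ^ (p - 1 / δ) < 1 :=
      ENNReal.rpow_lt_one_of_one_lt_of_neg (by norm_num) (by linarith)
    have hub : ∑' n : ℕ, (2 : ENNReal) ^ (((n : ℝ) + 1) * p)
        * ρ {y | (2 : ENNReal) ^ ((n : ℝ)) < g y}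
        ≤ ∑' n : ℕ, (K * (2 : ENNReal) ^ p) * ((2 : ENNReal) ^ (p - 1 / δ)) ^ n := by
      refine ENNReal.tsum_le_tsum (fun n => ?_)
      rw [← hterm n]
      refine mul_le_mul_right ?_ _
      refine le_trans (measure_mono ?_) (Sbound n)
      intro x hx
      exact lt_of_lt_of_le hx (hgf x)
    refine lt_of_le_of_lt hub ?_
    rw [ENNReal.tsum_mul_left, ENNReal.tsum_geometric]
    refine ENNReal.mul_lt_top ?_ ?_
    · exact ENNReal.mul_lt_top hKtop.lt_top
        (ENNReal.rpow_lt_top_of_nonneg hp.le h2t)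
    · exact ENNReal.inv_lt_top.mpr (tsub_pos_iff_lt.mpr hr1)
  refine lt_of_le_of_lt hFsum ?_
  exact ENNReal.add_lt_top.mpr ⟨measure_lt_top ρ _, hsum_le⟩
end

section
/- Let β > 1, κ > 0, r > 0, R > 0, and β/2 < ς ≤ s. Suppose ρ is a measure supported on {u : ‖u‖_{H^{β/2}} ≤ R} satisfying the Gaussian-type tail bound ρ(‖u‖_{H^s} ≥ λ) ≤ C exp(-c λ^{2r}) for all λ > 0. Then setting a = 2rκ(2s-β)/(2ς-β) and b = 4r(s-β)/(2ς-β), there are constants C', c' > 0 such that ρ(‖u‖_{H^ς} ≥ t^κ) ≤ C' exp(-c' t^a / R^b) for all t > 0. -/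
/-- The Sobolev `H^σ(𝕋)` norm of a function, expressed through its Fourier coefficients
`c : ℤ → ℂ`: `‖u‖_{H^σ} = (Σ_{n∈ℤ} (1+|n|^{2σ}) |û(n)|²)^{1/2}`. -/
noncomputable def sobolevNorm (σ : ℝ) (c : ℤ → ℂ) : ℝ :=
  (∑' n : ℤ, (1 + |(n : ℝ)| ^ (2 * σ)) * ‖c n‖ ^ 2) ^ ((1 : ℝ) / 2)

set_option maxHeartbeats 2000000 in
/-- Concentration transfer: let `β > 1`, `κ > 0`, `r > 0`, `R > 0`, `β/2 < ς ≤ s`, and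
let `ρ` be a measure supported (a.e.) on `{‖u‖_{H^{β/2}} ≤ R}` (within `H^s`) satisfying
the Gaussian-type tail bound `ρ(‖u‖_{H^s} ≥ λ) ≤ C exp(-c λ^{2r})`. Then with
`a = 2rκ(2s-β)/(2ς-β)` and `b = 4r(s-β)/(2ς-β)` there exist `C', c' > 0` such that
`ρ(‖u‖_{H^ς} ≥ t^κ) ≤ C' exp(-c' t^a / R^b)` for all `t > 0`. -/
theorem stmt17 {X : Type*} [MeasurableSpace X] (ρ : MeasureTheory.Measure X)
    (β κ r R s ς : ℝ) (hβ : 1 < β) (hκ : 0 < κ) (hr : 0 < r) (hR : 0 < R)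
    (hς : β / 2 < ς) (hςs : ς ≤ s)
    (F : X → ℤ → ℂ)
    (hsum : ∀ᵐ x ∂ρ, Summable (fun n : ℤ => (1 + |(n : ℝ)| ^ (2 * s)) * ‖F x n‖ ^ 2))
    (hsupp : ∀ᵐ x ∂ρ, sobolevNorm (β / 2) (F x) ≤ R)
    (C c : ℝ) (hC : 0 < C) (hc : 0 < c)
    (htail : ∀ lam : ℝ, 0 < lam →
      ρ {x | lam ≤ sobolevNorm s (F x)} ≤
        ENNReal.ofReal (C * Real.exp (-c * lam ^ (2 * r)))) :
    ∃ C' c' : ℝ, 0 < C' ∧ 0 < c' ∧ ∀ t : ℝ, 0 < t →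
      ρ {x | t ^ κ ≤ sobolevNorm ς (F x)} ≤
        ENNReal.ofReal (C' * Real.exp
          (-c' * t ^ (2 * r * κ * ((2 * s - β) / (2 * ς - β))) /
            R ^ (4 * r * ((s - β) / (2 * ς - β))))) := by
  have hβ0 : (0:ℝ) < β := by linarith
  have hς0 : (0:ℝ) < ς := by linarith
  have hs0 : (0:ℝ) < s := by linarith
  have h2sβ : 0 < 2 * s - β := by linarith
  have h2ςβ : 0 < 2 * ς - β := by linarith
  set θ : ℝ := (2*s - 2*ς) / (2*s - β) with hθdef
  set δ : ℝ := (2*ς - β) / (2*s - β) with hδdef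
  have hθ0 : 0 ≤ θ := div_nonneg (by linarith) h2sβ.le
  have hδ0 : 0 < δ := div_pos h2ςβ h2sβ
  have hθδ : θ + δ = 1 := by rw [hθdef, hδdef]; field_simp; ring
  clear_value θ δ
  -- pointwise interpolation with parameter ε
  have key : ∀ (y m ε : ℝ), 0 ≤ y → 0 ≤ m → 0 < ε →
      (1 + y ^ (2*ς)) * m ≤ 2*θ*ε*((1 + y ^ β) * m)
        + 2*δ*ε^(-(θ/δ))*((1 + y ^ (2*s)) * m) := by
    intro y m ε hy hm hε
    have hP1 : (1:ℝ) ≤ 1 + y ^ β := le_add_of_nonneg_right (Real.rpow_nonneg hy _)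
    have hQ1 : (1:ℝ) ≤ 1 + y ^ (2*s) := le_add_of_nonneg_right (Real.rpow_nonneg hy _)
    have hP0 : (0:ℝ) < 1 + y ^ β := lt_of_lt_of_le one_pos hP1
    have hQ0 : (0:ℝ) < 1 + y ^ (2*s) := lt_of_lt_of_le one_pos hQ1
    have hexp : 2*ς = β*θ + (2*s)*δ := by rw [hθdef, hδdef]; field_simp; ring
    have hgm : 1 + y ^ (2*ς) ≤ 2 * ((1 + y^β)^θ * (1 + y^(2*s))^δ) := by
      have h1 : (1:ℝ) ≤ (1 + y^β)^θ * (1 + y^(2*s))^δ :=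
        by nlinarith [Real.one_le_rpow hP1 hθ0, Real.one_le_rpow hQ1 hδ0.le]
      have h2 : y ^ (2*ς) ≤ (1 + y^β)^θ * (1 + y^(2*s))^δ := by
        have heq : y ^ (2*ς) = (y^β)^θ * (y^(2*s))^δ := by
          rw [hexp, Real.rpow_add' hy (by rw [← hexp]; exact (by linarith : (0:ℝ) < 2*ς).ne'),
            Real.rpow_mul hy, Real.rpow_mul hy]
        rw [heq]
        exact mul_le_mul (Real.rpow_le_rpow (Real.rpow_nonneg hy _) (by linarith) hθ0)
          (Real.rpow_le_rpow (Real.rpow_nonneg hy _) (by linarith) hδ0.le)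
          (Real.rpow_nonneg (Real.rpow_nonneg hy _) _)
          (Real.rpow_nonneg (by linarith) _)
      linarith
    have harith : (1 + y^β)^θ * (1 + y^(2*s))^δ
        ≤ θ*(ε*(1+y^β)) + δ*(ε^(-(θ/δ))*(1+y^(2*s))) := by
      have heq : (1 + y^β)^θ * (1 + y^(2*s))^δ
          = (ε*(1+y^β))^θ * (ε^(-(θ/δ))*(1+y^(2*s)))^δ := by
        rw [Real.mul_rpow hε.le hP0.le,
          Real.mul_rpow (Real.rpow_nonneg hε.le _) hQ0.le]
        have hc1 : (ε ^ (-(θ/δ))) ^ δ = ε ^ (-θ) := by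
          rw [← Real.rpow_mul hε.le]
          congr 1
          field_simp
        have hc2 : ε ^ θ * ε ^ (-θ) = 1 := by
          rw [← Real.rpow_add hε]; simp
        rw [hc1, show ε ^ θ * (1+y^β)^θ * (ε^(-θ) * (1+y^(2*s))^δ)
            = (ε^θ*ε^(-θ))*((1+y^β)^θ*(1+y^(2*s))^δ) from by ring, hc2, one_mul]
      rw [heq]
      exact Real.geom_mean_le_arith_mean2_weighted hθ0 hδ0.le (by positivity) (by positivity) hθδ
    calc (1 + y ^ (2*ς)) * m ≤ (2 * ((1 + y^β)^θ * (1 + y^(2*s))^δ)) * m :=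
          mul_le_mul_of_nonneg_right hgm hm
      _ ≤ (2 * (θ*(ε*(1+y^β)) + δ*(ε^(-(θ/δ))*(1+y^(2*s))))) * m :=
          mul_le_mul_of_nonneg_right (by linarith) hm
      _ = _ := by ring
  -- weight monotonicity on integers
  have hweight : ∀ (p q : ℝ), 0 < p → p ≤ q → ∀ n : ℤ,
      (1 + |(n:ℝ)| ^ p) ≤ (1 + |(n:ℝ)| ^ q) := by
    intro p q hp hpq n
    rcases eq_or_ne n 0 with h | h
    · subst h
      simp [Real.zero_rpow hp.ne', Real.zero_rpow (lt_of_lt_of_le hp hpq).ne']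
    · have h1 : (1:ℝ) ≤ |(n:ℝ)| := by
        have := Int.one_le_abs h
        calc (1:ℝ) = ((1:ℤ):ℝ) := by norm_num
          _ ≤ ((|n|:ℤ):ℝ) := by exact_mod_cast this
          _ = |(n:ℝ)| := by push_cast; ring
      have := Real.rpow_le_rpow_of_exponent_le h1 hpq
      linarith
  -- the constant K
  set K : ℝ := (4*(θ+1)) ^ (-(θ/δ)) * (4*δ)⁻¹ with hKdef
  have hK : 0 < K := by
    rw [hKdef]
    exact mul_pos (Real.rpow_pos_of_pos (by positivity) _) (by positivity)
  clear_value K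
  refine ⟨C, c * K ^ r * R ^ (4*r*(ς-β)/(2*ς-β)), hC,
    by positivity, ?_⟩
  intro t ht
  set ε : ℝ := t ^ (2*κ) * (4*(θ+1))⁻¹ * (R ^ (2:ℝ))⁻¹ with hεdef
  have hε : 0 < ε := by
    rw [hεdef]
    have h1 := Real.rpow_pos_of_pos ht (2*κ)
    have h2 := Real.rpow_pos_of_pos hR (2:ℝ)
    positivity
  clear_value ε
  set B0 : ℝ := K * t ^ (2*κ/δ) * R ^ (-(2*θ/δ)) with hB0def
  have hB0 : 0 < B0 := by
    rw [hB0def]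
    have h1 := Real.rpow_pos_of_pos ht (2*κ/δ)
    have h2 := Real.rpow_pos_of_pos hR (-(2*θ/δ))
    positivity
  clear_value B0
  set lam : ℝ := B0 ^ ((1:ℝ)/2) with hlamdef
  have hlam : 0 < lam := by rw [hlamdef]; exact Real.rpow_pos_of_pos hB0 _
  clear_value lam
  have hR2 : R ^ (2:ℝ) = R * R := by
    rw [show (2:ℝ) = ((2:ℕ):ℝ) by norm_num, Real.rpow_natCast]; ring
  -- key identity
  have hident : t ^ (2*κ) * ε ^ (θ/δ) / (4*δ) = B0 := by
    have e1 : ε ^ (θ/δ) = t ^ (2*κ*(θ/δ)) * ((4*(θ+1)) ^ (θ/δ))⁻¹ * R ^ (-(2*(θ/δ))) := by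
      rw [hεdef, Real.mul_rpow (by positivity) (by positivity),
        Real.mul_rpow (by positivity) (by positivity),
        ← Real.rpow_mul ht.le, Real.inv_rpow (by positivity),
        Real.inv_rpow (Real.rpow_nonneg hR.le _), ← Real.rpow_mul hR.le,
        ← Real.rpow_neg hR.le]
    rw [e1, hB0def, hKdef]
    rw [show t ^ (2*κ) * (t ^ (2*κ*(θ/δ)) * ((4*(θ+1)) ^ (θ/δ))⁻¹ * R ^ (-(2*(θ/δ)))) / (4*δ)
        = (t ^ (2*κ) * t ^ (2*κ*(θ/δ))) * (((4*(θ+1)) ^ (θ/δ))⁻¹ * (4*δ)⁻¹ * R ^ (-(2*(θ/δ))))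
        from by ring, ← Real.rpow_add ht, ← Real.rpow_neg (by positivity : (0:ℝ) ≤ 4*(θ+1))]
    rw [show 2*κ + 2*κ*(θ/δ) = 2*κ/δ from by
      field_simp
      linear_combination hθδ]
    rw [show -(2*(θ/δ)) = -(2*θ/δ) from by ring]
    ring
  -- a.e. inclusion
  have hae : {x | t ^ κ ≤ sobolevNorm ς (F x)} ≤ᵐ[ρ] {x | lam ≤ sobolevNorm s (F x)} := by
    filter_upwards [hsum, hsupp] with x hS hRx hx
    replace hx : t ^ κ ≤ sobolevNorm ς (F x) := hx
    show lam ≤ sobolevNorm s (F x)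
    simp only [sobolevNorm] at hx hRx ⊢
    rw [show 2*(β/2) = β from by ring] at hRx
    have hm0 : ∀ n : ℤ, (0:ℝ) ≤ ‖F x n‖ ^ 2 := fun n => by positivity
    have hterm0 : ∀ (p : ℝ) (n : ℤ), 0 ≤ (1 + |(n:ℝ)| ^ p) * ‖F x n‖ ^ 2 := fun p n => by
      have h1 := Real.rpow_nonneg (abs_nonneg ((n:ℝ))) p
      have h2 := hm0 n
      positivity
    have hSβ : Summable (fun n : ℤ => (1 + |(n:ℝ)| ^ β) * ‖F x n‖ ^ 2) :=
      Summable.of_nonneg_of_le (hterm0 β)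
        (fun n => mul_le_mul_of_nonneg_right (hweight β (2*s) hβ0 (by linarith) n) (hm0 n)) hS
    have hSς : Summable (fun n : ℤ => (1 + |(n:ℝ)| ^ (2*ς)) * ‖F x n‖ ^ 2) :=
      Summable.of_nonneg_of_le (hterm0 (2*ς))
        (fun n => mul_le_mul_of_nonneg_right (hweight (2*ς) (2*s) (by linarith) (by linarith) n)
          (hm0 n)) hS
    set Tβ : ℝ := ∑' n : ℤ, (1 + |(n:ℝ)| ^ β) * ‖F x n‖ ^ 2 with hTβdef
    set Tς : ℝ := ∑' n : ℤ, (1 + |(n:ℝ)| ^ (2*ς)) * ‖F x n‖ ^ 2 with hTςdef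
    set Ts : ℝ := ∑' n : ℤ, (1 + |(n:ℝ)| ^ (2*s)) * ‖F x n‖ ^ 2 with hTsdef
    have hTβ0 : 0 ≤ Tβ := by rw [hTβdef]; exact tsum_nonneg (hterm0 β)
    have hTς0 : 0 ≤ Tς := by rw [hTςdef]; exact tsum_nonneg (hterm0 (2*ς))
    have hTs0 : 0 ≤ Ts := by rw [hTsdef]; exact tsum_nonneg (hterm0 (2*s))
    clear_value Tβ Tς Ts
    -- Tβ ≤ R*R
    have hTβR : Tβ ≤ R * R := by
      have h1 := mul_self_le_mul_self (Real.rpow_nonneg hTβ0 ((1:ℝ)/2)) hRx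
      rwa [← Real.rpow_add' hTβ0 (by norm_num : (1:ℝ)/2 + 1/2 ≠ 0), show (1:ℝ)/2 + 1/2 = 1
        from by norm_num, Real.rpow_one] at h1
    -- t^(2κ) ≤ Tς
    have htκ0 : 0 ≤ t ^ κ := (Real.rpow_pos_of_pos ht κ).le
    have ht2κ : t ^ (2*κ) ≤ Tς := by
      have h1 := mul_self_le_mul_self htκ0 hx
      rwa [← Real.rpow_add' hTς0 (by norm_num : (1:ℝ)/2 + 1/2 ≠ 0), show (1:ℝ)/2 + 1/2 = 1
        from by norm_num, Real.rpow_one, ← Real.rpow_add ht, show κ + κ = 2*κ from by ring] at h1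
    -- summed interpolation inequality
    have hsumineq : Tς ≤ 2*θ*ε*Tβ + 2*δ*ε^(-(θ/δ))*Ts := by
      rw [hTβdef, hTςdef, hTsdef]
      have h1 : (∑' n : ℤ, (1 + |(n:ℝ)| ^ (2*ς)) * ‖F x n‖ ^ 2)
          ≤ ∑' n : ℤ, (2*θ*ε*((1 + |(n:ℝ)| ^ β) * ‖F x n‖ ^ 2)
          + 2*δ*ε^(-(θ/δ))*((1 + |(n:ℝ)| ^ (2*s)) * ‖F x n‖ ^ 2)) := by
        refine Summable.tsum_le_tsum
          (fun n => key |(n:ℝ)| (‖F x n‖ ^ 2) ε (abs_nonneg _) (hm0 n) hε) hSς ?_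
        exact ((hSβ.mul_left _).add (hS.mul_left _))
      rwa [Summable.tsum_add (hSβ.mul_left _) (hS.mul_left _), tsum_mul_left, tsum_mul_left] at h1
    -- bound the low-frequency part
    have hlow : 2*θ*ε*Tβ ≤ t ^ (2*κ) / 2 := by
      have h1 : 2*θ*ε*Tβ ≤ 2*θ*ε*(R*R) :=
        mul_le_mul_of_nonneg_left hTβR (by positivity)
      have h2 : 2*θ*ε*(R*R) = t ^ (2*κ) * (θ/(2*(θ+1))) := by
        rw [hεdef, hR2]
        field_simp
        ring
      have h3 : θ/(2*(θ+1)) ≤ 1/2 := by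
        rw [div_le_iff₀ (by positivity : (0:ℝ) < 2*(θ + 1))]
        linarith
      have h4 : (0:ℝ) ≤ t ^ (2*κ) := (Real.rpow_pos_of_pos ht _).le
      have h5 : t ^ (2*κ) * (θ/(2*(θ+1))) ≤ t ^ (2*κ) * (1/2) :=
        mul_le_mul_of_nonneg_left h3 h4
      linarith
    -- lower bound on Ts
    have hTs_lb : B0 ≤ Ts := by
      have hεp : 0 < ε ^ (θ/δ) := Real.rpow_pos_of_pos hε _
      have h3 : t ^ (2*κ) / 2 ≤ 2*δ*(ε^(θ/δ))⁻¹*Ts := by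
        rw [← Real.rpow_neg hε.le]
        linarith
      have h4 : t ^ (2*κ) * ε ^ (θ/δ) ≤ 4*δ*Ts := by
        have h5 := mul_le_mul_of_nonneg_right h3 hεp.le
        have h6 : 2*δ*(ε^(θ/δ))⁻¹*Ts * ε^(θ/δ) = 2*δ*Ts := by
          field_simp
        rw [h6] at h5
        nlinarith
      rw [← hident, div_le_iff₀ (by positivity : (0:ℝ) < 4*δ)]
      linarith
    rw [hlamdef]
    exact Real.rpow_le_rpow hB0.le hTs_lb (by norm_num)
  -- conclude
  calc ρ {x | t ^ κ ≤ sobolevNorm ς (F x)}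
      ≤ ρ {x | lam ≤ sobolevNorm s (F x)} := MeasureTheory.measure_mono_ae hae
    _ ≤ ENNReal.ofReal (C * Real.exp (-c * lam ^ (2*r))) := htail lam hlam
    _ = _ := by
        congr 1
        have hlam2r : lam ^ (2*r) = B0 ^ r := by
          rw [hlamdef, ← Real.rpow_mul hB0.le]
          congr 1
          ring
        have he1 : 2*κ/δ*r = 2*r*κ*((2*s-β)/(2*ς-β)) := by
          rw [hδdef]
          field_simp
        have he2 : -(2*θ/δ)*r = -(4*r*((s-ς)/(2*ς-β))) := by
          rw [hθdef, hδdef, mul_div_assoc, div_div_div_cancel_right₀ h2sβ.ne']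
          ring
        have hB0r : B0 ^ r = K ^ r * t ^ (2*r*κ*((2*s-β)/(2*ς-β)))
            * R ^ (-(4*r*((s-ς)/(2*ς-β)))) := by
          rw [hB0def, Real.mul_rpow (by positivity) (Real.rpow_nonneg hR.le _),
            Real.mul_rpow hK.le (Real.rpow_nonneg ht.le _),
            ← Real.rpow_mul ht.le, ← Real.rpow_mul hR.le]
          rw [he1, he2]
        have hRsplit : R ^ (4*r*(ς-β)/(2*ς-β))
            = R ^ (-(4*r*((s-ς)/(2*ς-β)))) * R ^ (4*r*((s-β)/(2*ς-β))) := by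
          rw [← Real.rpow_add hR]
          congr 1
          field_simp
          ring
        have hRB : R ^ (4*r*((s-β)/(2*ς-β))) ≠ 0 := (Real.rpow_pos_of_pos hR _).ne'
        rw [hlam2r, hB0r, hRsplit]
        congr 1
        field_simp
end
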